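/- Let I be a support-2 monomial ideal in K[x1,x2,x3,x4] whose underlying graph is the 4-cycle, with exactly one generator per edge, written x_i^{w_{i,j}} x_j^{w_{j,i}} for each edge {x_i,x_j}. If w_{1,2} < w_{1,4}, then the monomial x1^{w_{1,2}} x4^{w_{4,1}} lies in I^{(1)} = Q(⟨x1,x3⟩) ∩ Q(⟨x2,x4⟩) but not in I; hence I has an embedded associated prime. -/

import Mathlib

set_option synthInstance.maxHeartbeats 1000000
set_option maxHeartbeats 1000000

open MvPolynomial

section Defs

variable {K : Type*} [Field K] {σ : Type*}

/-- `I` is a monomial ideal. -/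
def IsMonomialIdeal (I : Ideal (MvPolynomial σ K)) : Prop :=
  ∃ A : Set (σ →₀ ℕ), I = Ideal.span ((fun a => (monomial a (1 : K) : MvPolynomial σ K)) '' A)

/-- Exponent vectors of the minimal monomial generators of `I`. -/
def minGens (I : Ideal (MvPolynomial σ K)) : Set (σ →₀ ℕ) :=
  {a | (monomial a (1 : K) : MvPolynomial σ K) ∈ I ∧
    ∀ b : σ →₀ ℕ, (monomial b (1 : K) : MvPolynomial σ K) ∈ I → b ≤ a → b = a}

/-- A support-2 monomial ideal: every minimal monomial generator is supported
on exactly two variables. -/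
def IsSupportTwo (I : Ideal (MvPolynomial σ K)) : Prop :=
  ∀ a ∈ minGens I, a.support.card = 2

variable [DecidableEq σ]

/-- Minimal monomial generators of `I` supported on `{i, j}`. -/
def supportedOn (I : Ideal (MvPolynomial σ K)) (i j : σ) : Set (σ →₀ ℕ) :=
  {a | a ∈ minGens I ∧ a.support = {i, j}}

/-- `ν_{i,j}`: the minimum exponent of `x_i` among the minimal generators of `I`
supported on `{i, j}`. -/
noncomputable def nuExp (I : Ideal (MvPolynomial σ K)) (i j : σ) : ℕ :=
  sInf ((fun a => a i) '' supportedOn I i j)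

/-- `μ_{i,j}`: the maximum exponent of `x_i` among the minimal generators of `I`
supported on `{i, j}`. -/
noncomputable def muExp (I : Ideal (MvPolynomial σ K)) (i j : σ) : ℕ :=
  sSup ((fun a => a i) '' supportedOn I i j)

/-- The underlying simple graph `G(I)` of a support-2 monomial ideal. -/
def underGraph (I : Ideal (MvPolynomial σ K)) : SimpleGraph σ where
  Adj i j := i ≠ j ∧ (supportedOn I i j).Nonempty
  symm := ⟨by
    rintro i j ⟨hij, a, hmin, hs⟩
    exact ⟨hij.symm, a, hmin, by rw [hs, Finset.pair_comm]⟩⟩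
  loopless := ⟨fun i h => h.1 rfl⟩

end Defs

section Symbolic

variable {R : Type*} [CommRing R]

/-- The component of `I` at a prime `P`, namely `I S_P ∩ S`. -/
noncomputable def localizedComponent (I P : Ideal R) (hP : P.IsPrime) : Ideal R :=
  letI := hP
  (I.map (algebraMap R (Localization.AtPrime P))).comap
    (algebraMap R (Localization.AtPrime P))

/-- The `s`-th symbolic power `I^{(s)} = ⋂_{P ∈ MinAss(I)} (I^s S_P ∩ S)`. -/
noncomputable def symbolicPower (I : Ideal R) (s : ℕ) : Ideal R :=
  ⨅ P : I.minimalPrimes, localizedComponent (I ^ s) P.1 P.2.1.1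

/-- A Simis ideal: `I^{(s)} = I^s` for all `s ≥ 1`. -/
def IsSimis (I : Ideal R) : Prop := ∀ s : ℕ, 1 ≤ s → symbolicPower I s = I ^ s

/-- `I` has no embedded associated primes. -/
def NoEmbeddedPrimes (I : Ideal R) : Prop :=
  ∀ P ∈ associatedPrimes R (R ⧸ I), P ∈ I.minimalPrimes

end Symbolic

section Decomp

variable {K : Type*} [Field K] {σ : Type*}

/-- An irreducible monomial ideal: generated by pure powers of variables. -/
def IsIrredMonomialIdeal (Q : Ideal (MvPolynomial σ K)) : Prop :=
  ∃ (t : Finset σ) (e : σ → ℕ), (∀ i ∈ t, 1 ≤ e i) ∧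
    Q = Ideal.span ((fun i => (X i : MvPolynomial σ K) ^ e i) '' t)

/-- `I` has a minimal (irredundant, distinct radicals) irreducible decomposition. -/
def HasMinimalIrredDecomp (I : Ideal (MvPolynomial σ K)) : Prop :=
  ∃ (r : ℕ) (Q : Fin r → Ideal (MvPolynomial σ K)),
    (∀ k, IsIrredMonomialIdeal (Q k)) ∧ I = ⨅ k, Q k ∧
    (∀ k, (⨅ l ∈ ({k}ᶜ : Set (Fin r)), Q l) ≠ I) ∧
    (∀ k l, k ≠ l → (Q k).radical ≠ (Q l).radical)

/-- The ideal obtained from `J` by the standard linear weighting `x_i ↦ x_i^{d_i}`. -/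
noncomputable def weightedIdeal (d : σ → ℕ) (J : Ideal (MvPolynomial σ K)) : Ideal (MvPolynomial σ K) :=
  Ideal.span {m | ∃ a ∈ minGens J, ∃ b : σ →₀ ℕ,
    (∀ i, b i = d i * a i) ∧ m = (monomial b (1 : K) : MvPolynomial σ K)}

/-- `I` has a standard linear weighting: there are `d_i ≥ 1` such that every
minimal generator supported on `{i,j}` is `x_i^{d_i} x_j^{d_j}`. -/
def HasStdWeighting (I : Ideal (MvPolynomial σ K)) : Prop :=
  ∃ d : σ → ℕ, (∀ i, 1 ≤ d i) ∧ ∀ a ∈ minGens I, ∀ i ∈ a.support, a i = d i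

variable (K) in
/-- The edge ideal of a simple graph. -/
noncomputable def edgeIdeal (G : SimpleGraph σ) : Ideal (MvPolynomial σ K) :=
  Ideal.span {m | ∃ i j, G.Adj i j ∧ m = (X i * X j : MvPolynomial σ K)}

end Decomp

section Graph

variable {σ : Type*}

/-- A vertex cover of a simple graph. -/
def IsVertexCover (G : SimpleGraph σ) (C : Set σ) : Prop :=
  ∀ ⦃i j⦄, G.Adj i j → i ∈ C ∨ j ∈ C

/-- A minimal vertex cover of a simple graph. -/
def IsMinimalVertexCover (G : SimpleGraph σ) (C : Set σ) : Prop :=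
  IsVertexCover G C ∧ ∀ D ⊆ C, IsVertexCover G D → D = C

end Graph

section CM

variable {K : Type*} [Field K] {σ : Type*}

/-- The depth of `S/I` with respect to the irrelevant maximal ideal
`⟨x_1, …, x_n⟩`: the supremum of lengths of regular sequences on `S/I`
consisting of elements of that ideal. -/
noncomputable def quotDepth (I : Ideal (MvPolynomial σ K)) : ℕ∞ :=
  sSup {n : ℕ∞ | ∃ rs : List (MvPolynomial σ K), (rs.length : ℕ∞) = n ∧
    (∀ r ∈ rs, r ∈ Ideal.span (Set.range (X : σ → MvPolynomial σ K))) ∧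
    RingTheory.Sequence.IsRegular (MvPolynomial σ K ⧸ I)
      (rs.map (Ideal.Quotient.mk I))}

/-- `S/I` is Cohen–Macaulay: depth equals Krull dimension. -/
def IsCohenMacaulayQuot (I : Ideal (MvPolynomial σ K)) : Prop :=
  (quotDepth I : WithBot ℕ∞) = ringKrullDim (MvPolynomial σ K ⧸ I)

/-- The height of a prime ideal, as the Krull dimension of the localization. -/
noncomputable def primeHeight' {R : Type*} [CommRing R] (P : Ideal R) (hP : P.IsPrime) :
    WithBot ℕ∞ :=
  letI := hP
  ringKrullDim (Localization.AtPrime P)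

/-- `I` is unmixed: all associated primes of `S/I` have the same height. -/
def IsUnmixed {R : Type*} [CommRing R] (I : Ideal R) : Prop :=
  ∀ P, ∀ hP : P ∈ associatedPrimes R (R ⧸ I), ∀ Q, ∀ hQ : Q ∈ associatedPrimes R (R ⧸ I),
    primeHeight' P hP.1 = primeHeight' Q hQ.1

end CM

section AuxProof

variable {R : Type*} [CommRing R]

lemma mem_localizedComponent_of_exists {I P : Ideal R} (hP : P.IsPrime)
    {m s : R} (hs : s ∉ P) (hsm : s * m ∈ I) : m ∈ localizedComponent I P hP := by
  letI := hP
  show m ∈ (I.map (algebraMap R (Localization.AtPrime P))).comap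
    (algebraMap R (Localization.AtPrime P))
  rw [Ideal.mem_comap]
  have hu : IsUnit (algebraMap R (Localization.AtPrime P) s) :=
    IsLocalization.map_units (M := P.primeCompl) _ ⟨s, hs⟩
  obtain ⟨v, hv⟩ := hu.exists_left_inv
  have h1m : algebraMap R (Localization.AtPrime P) (s * m) ∈
      I.map (algebraMap R (Localization.AtPrime P)) := Ideal.mem_map_of_mem _ hsm
  have heq : algebraMap R (Localization.AtPrime P) m
      = v * algebraMap R (Localization.AtPrime P) (s * m) := by
    rw [map_mul, ← mul_assoc, hv, one_mul]
  rw [heq]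
  exact Ideal.mul_mem_left _ _ h1m

end AuxProof

section Aux
variable {K : Type*} [Field K]

noncomputable def f02 : MvPolynomial (Fin 4) K →ₐ[K] MvPolynomial (Fin 2) K :=
  aeval ![0, X 0, 0, X 1]

noncomputable def s02 : MvPolynomial (Fin 2) K →ₐ[K] MvPolynomial (Fin 4) K :=
  aeval ![X 1, X 3]

noncomputable def f13 : MvPolynomial (Fin 4) K →ₐ[K] MvPolynomial (Fin 2) K :=
  aeval ![X 0, 0, X 1, 0]

noncomputable def s13 : MvPolynomial (Fin 2) K →ₐ[K] MvPolynomial (Fin 4) K :=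
  aeval ![X 0, X 2]

lemma sub_mem02 (p : MvPolynomial (Fin 4) K) :
    p - s02 (f02 p) ∈ Ideal.span {(X 0 : MvPolynomial (Fin 4) K), X 2} := by
  induction p using MvPolynomial.induction_on with
  | C a => simp [f02, s02]
  | add p q hp hq =>
      have := Ideal.add_mem _ hp hq
      simpa [map_add, sub_add_sub_comm] using this
  | mul_X p k hp =>
      rw [map_mul, map_mul]
      fin_cases k
      · show p * X 0 - s02 (f02 p) * s02 (f02 (X 0)) ∈ _
        have h0 : f02 (K := K) (X (0 : Fin 4)) = 0 := by simp [f02]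
        rw [h0, map_zero, mul_zero, sub_zero]
        exact Ideal.mul_mem_left _ _ (Ideal.subset_span (Set.mem_insert _ _))
      · show p * X 1 - s02 (f02 p) * s02 (f02 (X 1)) ∈ _
        have h1 : s02 (f02 (K := K) (X (1 : Fin 4))) = X 1 := by simp [f02, s02]
        rw [h1, ← sub_mul]
        exact Ideal.mul_mem_right _ _ hp
      · show p * X 2 - s02 (f02 p) * s02 (f02 (X 2)) ∈ _
        have h0 : f02 (K := K) (X (2 : Fin 4)) = 0 := by simp [f02]
        rw [h0, map_zero, mul_zero, sub_zero]
        exact Ideal.mul_mem_left _ _ (Ideal.subset_span (by simp))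
      · show p * X 3 - s02 (f02 p) * s02 (f02 (X 3)) ∈ _
        have h1 : s02 (f02 (K := K) (X (3 : Fin 4))) = X 3 := by simp [f02, s02]
        rw [h1, ← sub_mul]
        exact Ideal.mul_mem_right _ _ hp

lemma sub_mem13 (p : MvPolynomial (Fin 4) K) :
    p - s13 (f13 p) ∈ Ideal.span {(X 1 : MvPolynomial (Fin 4) K), X 3} := by
  induction p using MvPolynomial.induction_on with
  | C a => simp [f13, s13]
  | add p q hp hq =>
      have := Ideal.add_mem _ hp hq
      simpa [map_add, sub_add_sub_comm] using this
  | mul_X p k hp =>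
      rw [map_mul, map_mul]
      fin_cases k
      · show p * X 0 - s13 (f13 p) * s13 (f13 (X 0)) ∈ _
        have h1 : s13 (f13 (K := K) (X (0 : Fin 4))) = X 0 := by simp [f13, s13]
        rw [h1, ← sub_mul]
        exact Ideal.mul_mem_right _ _ hp
      · show p * X 1 - s13 (f13 p) * s13 (f13 (X 1)) ∈ _
        have h0 : f13 (K := K) (X (1 : Fin 4)) = 0 := by simp [f13]
        rw [h0, map_zero, mul_zero, sub_zero]
        exact Ideal.mul_mem_left _ _ (Ideal.subset_span (Set.mem_insert _ _))
      · show p * X 2 - s13 (f13 p) * s13 (f13 (X 2)) ∈ _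
        have h1 : s13 (f13 (K := K) (X (2 : Fin 4))) = X 2 := by simp [f13, s13]
        rw [h1, ← sub_mul]
        exact Ideal.mul_mem_right _ _ hp
      · show p * X 3 - s13 (f13 p) * s13 (f13 (X 3)) ∈ _
        have h0 : f13 (K := K) (X (3 : Fin 4)) = 0 := by simp [f13]
        rw [h0, map_zero, mul_zero, sub_zero]
        exact Ideal.mul_mem_left _ _ (Ideal.subset_span (by simp))

lemma span02_eq_ker :
    Ideal.span {(X 0 : MvPolynomial (Fin 4) K), X 2} = RingHom.ker (f02 (K := K)).toRingHom := by
  apply le_antisymm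
  · rw [Ideal.span_le]
    rintro p hp
    simp only [Set.mem_insert_iff, Set.mem_singleton_iff] at hp
    rcases hp with rfl | rfl <;>
      · show _ ∈ RingHom.ker _
        rw [RingHom.mem_ker]
        simp [f02]
  · intro p hp
    have hp' : f02 (K := K) p = 0 := hp
    have h := sub_mem02 (K := K) p
    rwa [hp', map_zero, sub_zero] at h

lemma span13_eq_ker :
    Ideal.span {(X 1 : MvPolynomial (Fin 4) K), X 3} = RingHom.ker (f13 (K := K)).toRingHom := by
  apply le_antisymm
  · rw [Ideal.span_le]
    rintro p hp
    simp only [Set.mem_insert_iff, Set.mem_singleton_iff] at hp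
    rcases hp with rfl | rfl <;>
      · show _ ∈ RingHom.ker _
        rw [RingHom.mem_ker]
        simp [f13]
  · intro p hp
    have hp' : f13 (K := K) p = 0 := hp
    have h := sub_mem13 (K := K) p
    rwa [hp', map_zero, sub_zero] at h

lemma span02_prime : (Ideal.span {(X 0 : MvPolynomial (Fin 4) K), X 2}).IsPrime := by
  rw [span02_eq_ker]; exact RingHom.ker_isPrime _

lemma span13_prime : (Ideal.span {(X 1 : MvPolynomial (Fin 4) K), X 3}).IsPrime := by
  rw [span13_eq_ker]; exact RingHom.ker_isPrime _

lemma X1_not_mem_span02 : (X 1 : MvPolynomial (Fin 4) K) ∉ Ideal.span {X 0, X 2} := by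
  rw [span02_eq_ker]
  intro h
  rw [RingHom.mem_ker] at h
  have : f02 (K := K) (X 1) = 0 := h
  rw [show f02 (K := K) (X 1) = X 0 by simp [f02]] at this
  exact X_ne_zero _ this

lemma X0_not_mem_span13 : (X 0 : MvPolynomial (Fin 4) K) ∉ Ideal.span {X 1, X 3} := by
  rw [span13_eq_ker]
  intro h
  rw [RingHom.mem_ker] at h
  have : f13 (K := K) (X 0) = 0 := h
  rw [show f13 (K := K) (X 0) = X 0 by simp [f13]] at this
  exact X_ne_zero _ this

end Aux

theorem stmt18 {K : Type*} [Field K]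
    (w12 w21 w23 w32 w34 w43 w14 w41 : ℕ)
    (h1 : 1 ≤ w12) (h2 : 1 ≤ w21) (h3 : 1 ≤ w23) (h4 : 1 ≤ w32)
    (h5 : 1 ≤ w34) (h6 : 1 ≤ w43) (h7 : 1 ≤ w14) (h8 : 1 ≤ w41)
    (hlt : w12 < w14)
    (I : Ideal (MvPolynomial (Fin 4) K))
    (hI : I = Ideal.span {X 0 ^ w12 * X 1 ^ w21, X 1 ^ w23 * X 2 ^ w32,
      X 2 ^ w34 * X 3 ^ w43, X 0 ^ w14 * X 3 ^ w41}) :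
    (monomial (Finsupp.single 0 w12 + Finsupp.single 3 w41) (1 : K) :
        MvPolynomial (Fin 4) K) ∈ symbolicPower I 1 ∧
    (monomial (Finsupp.single 0 w12 + Finsupp.single 3 w41) (1 : K) :
        MvPolynomial (Fin 4) K) ∉ I ∧
    ∃ P ∈ associatedPrimes (MvPolynomial (Fin 4) K) (MvPolynomial (Fin 4) K ⧸ I),
      P ∉ I.minimalPrimes := by
  set m : MvPolynomial (Fin 4) K :=
    monomial (Finsupp.single 0 w12 + Finsupp.single 3 w41) (1 : K) with hm
  have hm' : m = X 0 ^ w12 * X 3 ^ w41 := by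
    rw [hm, X_pow_eq_monomial, X_pow_eq_monomial, monomial_mul, one_mul]
  -- generators
  have hg1 : (X 0 ^ w12 * X 1 ^ w21 : MvPolynomial (Fin 4) K) ∈ I := by
    rw [hI]; exact Ideal.subset_span (by simp)
  have hg2 : (X 1 ^ w23 * X 2 ^ w32 : MvPolynomial (Fin 4) K) ∈ I := by
    rw [hI]; exact Ideal.subset_span (by simp)
  have hg3 : (X 2 ^ w34 * X 3 ^ w43 : MvPolynomial (Fin 4) K) ∈ I := by
    rw [hI]; exact Ideal.subset_span (by simp)
  have hg4 : (X 0 ^ w14 * X 3 ^ w41 : MvPolynomial (Fin 4) K) ∈ I := by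
    rw [hI]; exact Ideal.subset_span (by simp)
  -- key multiples
  have hs1m : X 1 ^ w21 * m ∈ I := by
    rw [hm', show (X 1 ^ w21 * (X 0 ^ w12 * X 3 ^ w41) : MvPolynomial (Fin 4) K)
      = (X 0 ^ w12 * X 1 ^ w21) * X 3 ^ w41 by ring]
    exact Ideal.mul_mem_right _ _ hg1
  have hs2m : X 0 ^ (w14 - w12) * m ∈ I := by
    rw [hm', ← mul_assoc, ← pow_add, show w14 - w12 + w12 = w14 by omega]
    exact hg4
  -- variables in spans
  have hX0 : (X 0 : MvPolynomial (Fin 4) K) ∈ Ideal.span {X 0, X 2} :=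
    Ideal.subset_span (by simp)
  have hX2 : (X 2 : MvPolynomial (Fin 4) K) ∈ Ideal.span {X 0, X 2} :=
    Ideal.subset_span (by simp)
  have hX1 : (X 1 : MvPolynomial (Fin 4) K) ∈ Ideal.span {X 1, X 3} :=
    Ideal.subset_span (by simp)
  have hX3 : (X 3 : MvPolynomial (Fin 4) K) ∈ Ideal.span {X 1, X 3} :=
    Ideal.subset_span (by simp)
  have hdvd : ∀ (P : Ideal (MvPolynomial (Fin 4) K)) (i : Fin 4) (a : ℕ)
      (q : MvPolynomial (Fin 4) K), X i ∈ P → 1 ≤ a → X i ^ a * q ∈ P := by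
    intro P i a q hx ha
    obtain ⟨b, rfl⟩ : ∃ b, a = b + 1 := ⟨a - 1, by omega⟩
    rw [pow_succ, mul_assoc]
    exact Ideal.mul_mem_left _ _ (Ideal.mul_mem_right _ _ hx)
  have hIle02 : I ≤ Ideal.span {X 0, X 2} := by
    rw [hI, Ideal.span_le]
    rintro p hp
    simp only [Set.mem_insert_iff, Set.mem_singleton_iff] at hp
    rcases hp with rfl | rfl | rfl | rfl
    · exact hdvd _ 0 _ _ hX0 h1
    · rw [mul_comm]; exact hdvd _ 2 _ _ hX2 h4
    · exact hdvd _ 2 _ _ hX2 h5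
    · exact hdvd _ 0 _ _ hX0 h7
  have hIle13 : I ≤ Ideal.span {X 1, X 3} := by
    rw [hI, Ideal.span_le]
    rintro p hp
    simp only [Set.mem_insert_iff, Set.mem_singleton_iff] at hp
    rcases hp with rfl | rfl | rfl | rfl
    · rw [mul_comm]; exact hdvd _ 1 _ _ hX1 h2
    · exact hdvd _ 1 _ _ hX1 h3
    · rw [mul_comm]; exact hdvd _ 3 _ _ hX3 h6
    · rw [mul_comm]; exact hdvd _ 3 _ _ hX3 h8
  -- dichotomy for primes over I
  have dich : ∀ P : Ideal (MvPolynomial (Fin 4) K), P.IsPrime → I ≤ P →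
      Ideal.span {X 0, X 2} ≤ P ∨ Ideal.span {X 1, X 3} ≤ P := by
    intro P hP hIP
    have pmem : ∀ (i : Fin 4) (n : ℕ), 1 ≤ n → X i ^ n ∈ P → X i ∈ P := fun i n hn h =>
      (hP.pow_mem_iff_mem n (by omega)).mp h
    have e1 : X 0 ∈ P ∨ X 1 ∈ P :=
      (hP.mem_or_mem (hIP hg1)).imp (pmem _ _ h1) (pmem _ _ h2)
    have e2 : X 1 ∈ P ∨ X 2 ∈ P :=
      (hP.mem_or_mem (hIP hg2)).imp (pmem _ _ h3) (pmem _ _ h4)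
    have e3 : X 2 ∈ P ∨ X 3 ∈ P :=
      (hP.mem_or_mem (hIP hg3)).imp (pmem _ _ h5) (pmem _ _ h6)
    have e4 : X 0 ∈ P ∨ X 3 ∈ P :=
      (hP.mem_or_mem (hIP hg4)).imp (pmem _ _ h7) (pmem _ _ h8)
    have key : ((X 0 : MvPolynomial (Fin 4) K) ∈ P ∧ X 2 ∈ P) ∨
        ((X 1 : MvPolynomial (Fin 4) K) ∈ P ∧ X 3 ∈ P) := by tauto
    rcases key with ⟨ha, hb⟩ | ⟨ha, hb⟩
    · left
      rw [Ideal.span_le]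
      rintro p hp
      simp only [Set.mem_insert_iff, Set.mem_singleton_iff] at hp
      rcases hp with rfl | rfl
      exacts [ha, hb]
    · right
      rw [Ideal.span_le]
      rintro p hp
      simp only [Set.mem_insert_iff, Set.mem_singleton_iff] at hp
      rcases hp with rfl | rfl
      exacts [ha, hb]
  -- primes over I containing X0 and X1 are not minimal
  have notmin : ∀ P : Ideal (MvPolynomial (Fin 4) K), P.IsPrime → I ≤ P →
      X 0 ∈ P → X 1 ∈ P → P ∉ I.minimalPrimes := by
    intro P hP hIP h0 h1' hmin
    rcases dich P hP hIP with hle | hle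
    · have hPle : P ≤ Ideal.span {X 0, X 2} := hmin.2 ⟨span02_prime, hIle02⟩ hle
      exact X1_not_mem_span02 (hPle h1')
    · have hPle : P ≤ Ideal.span {X 1, X 3} := hmin.2 ⟨span13_prime, hIle13⟩ hle
      exact X0_not_mem_span13 (hPle h0)
  -- part 2 : m ∉ I
  have hmnot : m ∉ I := by
    intro hmem
    rw [hI, Ideal.mem_span_insert] at hmem
    obtain ⟨c1, z1, hz1, heq1⟩ := hmem
    rw [Ideal.mem_span_insert] at hz1
    obtain ⟨c2, z2, hz2, heq2⟩ := hz1
    rw [Ideal.mem_span_insert] at hz2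
    obtain ⟨c3, z3, hz3, heq3⟩ := hz2
    rw [Ideal.mem_span_singleton'] at hz3
    obtain ⟨c4, heq4⟩ := hz3
    have E : m = c1 * (X 0 ^ w12 * X 1 ^ w21) + (c2 * (X 1 ^ w23 * X 2 ^ w32)
        + (c3 * (X 2 ^ w34 * X 3 ^ w43) + c4 * (X 0 ^ w14 * X 3 ^ w41))) := by
      simp only [heq1, heq2, heq3, ← heq4, smul_eq_mul]
    set e : Fin 4 →₀ ℕ := Finsupp.single 0 w12 + Finsupp.single 3 w41 with he
    have hb1 : ¬ (Finsupp.single 0 w12 + Finsupp.single 1 w21 : Fin 4 →₀ ℕ) ≤ e := by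
      intro hle
      have := Finsupp.le_def.mp hle 1
      simp [he, Finsupp.single_apply] at this
      omega
    have hb2 : ¬ (Finsupp.single 1 w23 + Finsupp.single 2 w32 : Fin 4 →₀ ℕ) ≤ e := by
      intro hle
      have := Finsupp.le_def.mp hle 1
      simp [he, Finsupp.single_apply] at this
      omega
    have hb3 : ¬ (Finsupp.single 2 w34 + Finsupp.single 3 w43 : Fin 4 →₀ ℕ) ≤ e := by
      intro hle
      have := Finsupp.le_def.mp hle 2
      simp [he, Finsupp.single_apply] at this
      omega
    have hb4 : ¬ (Finsupp.single 0 w14 + Finsupp.single 3 w41 : Fin 4 →₀ ℕ) ≤ e := by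
      intro hle
      have := Finsupp.le_def.mp hle 0
      simp [he, Finsupp.single_apply] at this
      omega
    have hcoeff := congrArg (coeff e) E
    rw [hm, show (X 0 ^ w12 * X 1 ^ w21 : MvPolynomial (Fin 4) K)
          = monomial (Finsupp.single 0 w12 + Finsupp.single 1 w21) 1 by
        rw [X_pow_eq_monomial, X_pow_eq_monomial, monomial_mul, one_mul],
      show (X 1 ^ w23 * X 2 ^ w32 : MvPolynomial (Fin 4) K)
          = monomial (Finsupp.single 1 w23 + Finsupp.single 2 w32) 1 by
        rw [X_pow_eq_monomial, X_pow_eq_monomial, monomial_mul, one_mul],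
      show (X 2 ^ w34 * X 3 ^ w43 : MvPolynomial (Fin 4) K)
          = monomial (Finsupp.single 2 w34 + Finsupp.single 3 w43) 1 by
        rw [X_pow_eq_monomial, X_pow_eq_monomial, monomial_mul, one_mul],
      show (X 0 ^ w14 * X 3 ^ w41 : MvPolynomial (Fin 4) K)
          = monomial (Finsupp.single 0 w14 + Finsupp.single 3 w41) 1 by
        rw [X_pow_eq_monomial, X_pow_eq_monomial, monomial_mul, one_mul]] at hcoeff
    rw [coeff_add, coeff_add, coeff_add, coeff_mul_monomial', coeff_mul_monomial',
      coeff_mul_monomial', coeff_mul_monomial', if_neg hb1, if_neg hb2, if_neg hb3,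
      if_neg hb4, coeff_monomial, if_pos rfl] at hcoeff
    simp at hcoeff
  refine ⟨?_, hmnot, ?_⟩
  · -- part 1
    rw [symbolicPower, Ideal.mem_iInf]
    rintro ⟨P, hPmin⟩
    have hP : P.IsPrime := hPmin.1.1
    have hIP : I ≤ P := hPmin.1.2
    have hex : ∃ s : MvPolynomial (Fin 4) K, s ∉ P ∧ s * m ∈ I := by
      by_cases h0 : X 0 ∈ P
      · by_cases h1' : X 1 ∈ P
        · exact absurd hPmin (notmin P hP hIP h0 h1')
        · exact ⟨X 1 ^ w21,
            fun hc => h1' ((hP.pow_mem_iff_mem _ (by omega)).mp hc), hs1m⟩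
      · exact ⟨X 0 ^ (w14 - w12),
          fun hc => h0 ((hP.pow_mem_iff_mem _ (by omega)).mp hc), hs2m⟩
    obtain ⟨s, hsP, hsm⟩ := hex
    exact mem_localizedComponent_of_exists _ hsP (by rw [pow_one]; exact hsm)
  · -- part 3
    have hne : (Ideal.Quotient.mk I) m ≠ 0 := by
      rw [Ne, Ideal.Quotient.eq_zero_iff_mem]; exact hmnot
    obtain ⟨P, hassoc, hle⟩ :=
      exists_le_isAssociatedPrime_of_isNoetherianRing (MvPolynomial (Fin 4) K) _ hne
    refine ⟨P, hassoc, ?_⟩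
    have hP : P.IsPrime := hassoc.1
    have hmem : ∀ r : MvPolynomial (Fin 4) K, r * m ∈ I → r ∈ P := by
      intro r hr
      apply hle
      rw [Submodule.mem_colon_singleton, Submodule.mem_bot]
      have hsm : r • (Ideal.Quotient.mk I) m = Ideal.Quotient.mk I (r * m) := rfl
      rw [hsm, Ideal.Quotient.eq_zero_iff_mem]
      exact hr
    have h0P : X 0 ∈ P :=
      (hP.pow_mem_iff_mem _ (by omega : 0 < w14 - w12)).mp (hmem _ hs2m)
    have h1P : X 1 ∈ P :=
      (hP.pow_mem_iff_mem _ (by omega : 0 < w21)).mp (hmem _ hs1m)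
    have hIP : I ≤ P := fun r hr => hmem r (Ideal.mul_mem_right _ _ hr)
    exact notmin P hP hIP h0P h1P
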